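/- Let N be a finite set with |N| = n ≥ 1, let g : 2^N → ℝ be any set function, and let ρ ∈ [0, 1). Then there exist a constant w₀ ∈ ℝ and weights (w_i)_{i∈N} ∈ ℝ^N such that E_{S∼Unif(N)}[(g(S) − w₀ − Σ_{i∈S} w_i)²] ≤ (1/(1−ρ²)) · (E_{S∼Unif(N)}[g(S)²] − E_{(S,S′)∼ρ-corr(N)}[g(S)·g(S′)]). -/
import Mathlib


open Finset

/-- Expectation of a set function under the uniform distribution over subsets of `ι`. -/
noncomputable def expectU {ι : Type*} [Fintype ι] [DecidableEq ι]
    (u : Finset ι → ℝ) : ℝ :=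
  (2 ^ Fintype.card ι : ℝ)⁻¹ * ∑ S : Finset ι, u S

/-- The `ρ`-correlated joint probability `P_ρ(S, S')` on pairs of subsets of `ι`. -/
noncomputable def pCorr {ι : Type*} [Fintype ι] [DecidableEq ι]
    (ρ : ℝ) (S S' : Finset ι) : ℝ :=
  (2 ^ Fintype.card ι : ℝ)⁻¹ *
    ∏ i : ι, if (i ∈ S ↔ i ∈ S') then (1 + ρ) / 2 else (1 - ρ) / 2

/-- `E_{(S,S') ∼ ρ-corr(N)}[g(S)·g(S')]`. -/
noncomputable def corrExpect {ι : Type*} [Fintype ι] [DecidableEq ι]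
    (ρ : ℝ) (g : Finset ι → ℝ) : ℝ :=
  ∑ S : Finset ι, ∑ S' : Finset ι, pCorr ρ S S' * (g S * g S')

section FourierAux

variable {ι : Type*} [Fintype ι] [DecidableEq ι]

private lemma aux_sum_prod_ite (a b : ι → ℝ) :
    ∑ S : Finset ι, ∏ i : ι, (if i ∈ S then a i else b i) = ∏ i : ι, (a i + b i) := by
  rw [Finset.prod_add, ← Finset.powerset_univ]
  refine Finset.sum_congr rfl fun t _ => ?_
  rw [Finset.prod_ite]
  congr 1
  · congr 1; ext i; simp
  · congr 1; ext i; simp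

/-- The character `χ_T(S) = ∏_{i∈T} (±1)`. -/
noncomputable def auxChi (T S : Finset ι) : ℝ := ∏ i ∈ T, (if i ∈ S then (1:ℝ) else -1)

private lemma auxChi_full (T S : Finset ι) :
    auxChi T S = ∏ i : ι, (if i ∈ T then (if i ∈ S then (1:ℝ) else -1) else 1) := by
  rw [auxChi, ← Finset.prod_filter]
  congr 1; ext i; simp

private lemma aux_two_pow_ne : ((2:ℝ) ^ Fintype.card ι) ≠ 0 := by positivity

private lemma aux_dual_orth (S S' : Finset ι) :
    ∑ T : Finset ι, auxChi T S * auxChi T S' =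
      if S = S' then (2:ℝ) ^ Fintype.card ι else 0 := by
  have h1 : ∀ T : Finset ι, auxChi T S * auxChi T S' =
      ∏ i : ι, (if i ∈ T then (if i ∈ S then (1:ℝ) else -1) * (if i ∈ S' then 1 else -1) else 1) := by
    intro T
    rw [auxChi_full, auxChi_full, ← Finset.prod_mul_distrib]
    refine Finset.prod_congr rfl fun i _ => ?_
    by_cases h : i ∈ T <;> simp [h]
  calc ∑ T : Finset ι, auxChi T S * auxChi T S'
      = ∑ T : Finset ι, ∏ i : ι,
        (if i ∈ T then (if i ∈ S then (1:ℝ) else -1) * (if i ∈ S' then 1 else -1) else 1) :=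
        Finset.sum_congr rfl fun T _ => h1 T
    _ = ∏ i : ι, ((if i ∈ S then (1:ℝ) else -1) * (if i ∈ S' then 1 else -1) + 1) :=
        aux_sum_prod_ite _ _
    _ = ∏ i : ι, (if (i ∈ S ↔ i ∈ S') then (2:ℝ) else 0) := by
        refine Finset.prod_congr rfl fun i _ => ?_
        by_cases h : i ∈ S <;> by_cases h' : i ∈ S' <;> simp [h, h'] <;> ring
    _ = _ := by
        by_cases h : S = S'
        · subst h; simp [Finset.prod_const, Finset.card_univ]
        · rw [if_neg h]
          have : ∃ i, ¬ (i ∈ S ↔ i ∈ S') := by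
            by_contra hc; push_neg at hc
            exact h (Finset.ext fun i => hc i)
          obtain ⟨i, hi⟩ := this
          exact Finset.prod_eq_zero (Finset.mem_univ i) (by rw [if_neg hi])

/-- Fourier coefficient. -/
noncomputable def auxFc (g : Finset ι → ℝ) (T : Finset ι) : ℝ :=
  (2 ^ Fintype.card ι : ℝ)⁻¹ * ∑ S : Finset ι, g S * auxChi T S

private lemma aux_inversion (g : Finset ι → ℝ) (S : Finset ι) :
    g S = ∑ T : Finset ι, auxFc g T * auxChi T S := by
  have : ∑ T : Finset ι, auxFc g T * auxChi T S
      = (2 ^ Fintype.card ι : ℝ)⁻¹ *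
          ∑ S' : Finset ι, g S' * ∑ T : Finset ι, auxChi T S' * auxChi T S := by
    simp only [auxFc, Finset.mul_sum, Finset.sum_mul]
    rw [Finset.sum_comm]
    refine Finset.sum_congr rfl fun S' _ => Finset.sum_congr rfl fun T _ => ?_
    ring
  rw [this]
  simp only [aux_dual_orth, mul_ite, mul_zero]
  rw [Finset.sum_ite_eq' Finset.univ S (fun S' => g S' * (2:ℝ) ^ Fintype.card ι)]
  simp only [Finset.mem_univ, if_true]
  field_simp

private lemma aux_plancherel (f h : Finset ι → ℝ) :
    expectU (fun S => f S * h S) = ∑ T : Finset ι, auxFc f T * auxFc h T := by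
  have key : ∀ S, f S * h S = ∑ T : Finset ι, auxFc h T * (f S * auxChi T S) := by
    intro S
    conv_lhs => rw [aux_inversion h S]
    rw [Finset.mul_sum]
    exact Finset.sum_congr rfl fun T _ => by ring
  rw [expectU]
  simp only [key]
  rw [Finset.sum_comm, Finset.mul_sum]
  refine Finset.sum_congr rfl fun T _ => ?_
  rw [← Finset.mul_sum]
  simp only [auxFc]
  ring

private lemma aux_orth (T U : Finset ι) :
    auxFc (auxChi T) U = if T = U then 1 else 0 := by
  have h1 : ∀ S : Finset ι, auxChi T S * auxChi U S =
      ∏ i : ι, (if i ∈ S then (1:ℝ)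
        else (if i ∈ T then (-1:ℝ) else 1) * (if i ∈ U then -1 else 1)) := by
    intro S
    rw [auxChi_full, auxChi_full, ← Finset.prod_mul_distrib]
    refine Finset.prod_congr rfl fun i _ => ?_
    by_cases hS : i ∈ S <;> by_cases hT : i ∈ T <;> by_cases hU : i ∈ U <;>
      simp [hS, hT, hU]
  have h2 : ∑ S : Finset ι, auxChi T S * auxChi U S
      = if T = U then (2:ℝ) ^ Fintype.card ι else 0 := by
    rw [show (∑ S : Finset ι, auxChi T S * auxChi U S) = _ from
        Finset.sum_congr rfl fun S _ => h1 S,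
      aux_sum_prod_ite]
    by_cases h : T = U
    · subst h
      rw [if_pos rfl, ← Finset.card_univ, ← Finset.prod_const]
      refine Finset.prod_congr rfl fun i _ => ?_
      by_cases hT : i ∈ T <;> simp [hT] <;> ring
    · rw [if_neg h]
      have : ∃ i, ¬ (i ∈ T ↔ i ∈ U) := by
        by_contra hc; push_neg at hc
        exact h (Finset.ext fun i => hc i)
      obtain ⟨i, hi⟩ := this
      refine Finset.prod_eq_zero (Finset.mem_univ i) ?_
      by_cases hT : i ∈ T <;> by_cases hU : i ∈ U <;> simp [hT, hU] at hi ⊢ <;> ring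
  rw [auxFc, h2]
  by_cases h : T = U <;> simp [h, aux_two_pow_ne]

private lemma aux_noise (ρ : ℝ) (T U : Finset ι) :
    ∑ S : Finset ι, ∑ S' : Finset ι, pCorr ρ S S' * (auxChi T S * auxChi U S') =
      if T = U then ρ ^ T.card else 0 := by
  set n := Fintype.card ι with hn
  have step1 : ∀ S : Finset ι, ∑ S' : Finset ι, pCorr ρ S S' * (auxChi T S * auxChi U S')
      = ((2:ℝ) ^ n)⁻¹ * ∏ i : ι,
          (if i ∈ S then (if i ∈ U then ρ else 1)
           else (if i ∈ T then (-1:ℝ) else 1) * (if i ∈ U then -ρ else 1)) := by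
    intro S
    have hbody : ∀ S' : Finset ι, pCorr ρ S S' * (auxChi T S * auxChi U S')
        = ((2:ℝ) ^ n)⁻¹ * ∏ i : ι,
            (if i ∈ S' then
              (if i ∈ S then (1 + ρ)/2 else (1 - ρ)/2) *
                (if i ∈ T then (if i ∈ S then (1:ℝ) else -1) else 1)
             else
              (if i ∈ S then (1 - ρ)/2 else (1 + ρ)/2) *
                (if i ∈ T then (if i ∈ S then (1:ℝ) else -1) else 1) *
                (if i ∈ U then -1 else 1)) := by
      intro S'
      rw [pCorr, auxChi_full, auxChi_full, mul_assoc]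
      congr 1
      rw [← Finset.prod_mul_distrib, ← Finset.prod_mul_distrib]
      refine Finset.prod_congr rfl fun i _ => ?_
      by_cases h1 : i ∈ S <;> by_cases h2 : i ∈ S' <;> by_cases h3 : i ∈ T <;>
        by_cases h4 : i ∈ U <;> simp [h1, h2, h3, h4] <;> ring
    calc ∑ S' : Finset ι, pCorr ρ S S' * (auxChi T S * auxChi U S')
        = ((2:ℝ) ^ n)⁻¹ * ∑ S' : Finset ι, ∏ i : ι,
            (if i ∈ S' then
              (if i ∈ S then (1 + ρ)/2 else (1 - ρ)/2) *
                (if i ∈ T then (if i ∈ S then (1:ℝ) else -1) else 1)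
             else
              (if i ∈ S then (1 - ρ)/2 else (1 + ρ)/2) *
                (if i ∈ T then (if i ∈ S then (1:ℝ) else -1) else 1) *
                (if i ∈ U then -1 else 1)) := by
          rw [Finset.mul_sum]; exact Finset.sum_congr rfl fun S' _ => hbody S'
      _ = _ := by
          rw [aux_sum_prod_ite]
          congr 1
          refine Finset.prod_congr rfl fun i _ => ?_
          by_cases h1 : i ∈ S <;> by_cases h3 : i ∈ T <;> by_cases h4 : i ∈ U <;>
            simp [h1, h3, h4] <;> ring
  have step2 : ∑ S : Finset ι, ∑ S' : Finset ι, pCorr ρ S S' * (auxChi T S * auxChi U S')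
      = ((2:ℝ) ^ n)⁻¹ * ∏ i : ι,
          (if i ∈ T then (if i ∈ U then 2*ρ else 0) else (if i ∈ U then (0:ℝ) else 2)) := by
    calc ∑ S : Finset ι, ∑ S' : Finset ι, pCorr ρ S S' * (auxChi T S * auxChi U S')
        = ((2:ℝ) ^ n)⁻¹ * ∑ S : Finset ι, ∏ i : ι,
            (if i ∈ S then (if i ∈ U then ρ else 1)
             else (if i ∈ T then (-1:ℝ) else 1) * (if i ∈ U then -ρ else 1)) := by
          rw [Finset.mul_sum]; exact Finset.sum_congr rfl fun S _ => step1 S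
      _ = _ := by
          rw [aux_sum_prod_ite]
          congr 1
          refine Finset.prod_congr rfl fun i _ => ?_
          by_cases h3 : i ∈ T <;> by_cases h4 : i ∈ U <;> simp [h3, h4] <;> ring
  rw [step2]
  by_cases h : T = U
  · subst h
    rw [if_pos rfl]
    have : ∏ i : ι, (if i ∈ T then (if i ∈ T then 2*ρ else 0) else (if i ∈ T then (0:ℝ) else 2))
        = (2:ℝ) ^ n * ρ ^ T.card := by
      have : ∀ i : ι,
          (if i ∈ T then (if i ∈ T then 2*ρ else 0) else (if i ∈ T then (0:ℝ) else 2))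
          = 2 * (if i ∈ T then ρ else 1) := by
        intro i; by_cases hT : i ∈ T <;> simp [hT]
      rw [Finset.prod_congr rfl fun i _ => this i, Finset.prod_mul_distrib,
        Finset.prod_const, Finset.card_univ, ← Finset.prod_filter]
      simp [Finset.filter_mem_eq_inter, hn]
    rw [this, ← mul_assoc, inv_mul_cancel₀ aux_two_pow_ne, one_mul]
  · rw [if_neg h]
    have : ∃ i, ¬ (i ∈ T ↔ i ∈ U) := by
      by_contra hc; push_neg at hc
      exact h (Finset.ext fun i => hc i)
    obtain ⟨i, hi⟩ := this
    have : ∏ i : ι,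
        (if i ∈ T then (if i ∈ U then 2*ρ else 0) else (if i ∈ U then (0:ℝ) else 2)) = 0 := by
      refine Finset.prod_eq_zero (Finset.mem_univ i) ?_
      by_cases hT : i ∈ T <;> by_cases hU : i ∈ U <;> simp [hT, hU] at hi ⊢
    rw [this, mul_zero]

private lemma aux_corr_eq (ρ : ℝ) (g : Finset ι → ℝ) :
    corrExpect ρ g = ∑ T : Finset ι, ρ ^ T.card * auxFc g T ^ 2 := by
  have expand : ∀ S S' : Finset ι, pCorr ρ S S' * (g S * g S')
      = ∑ T : Finset ι, ∑ U : Finset ι,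
          auxFc g T * auxFc g U * (pCorr ρ S S' * (auxChi T S * auxChi U S')) := by
    intro S S'
    conv_lhs => rw [aux_inversion g S, aux_inversion g S']
    rw [Finset.sum_mul_sum, Finset.mul_sum]
    refine Finset.sum_congr rfl fun T _ => ?_
    rw [Finset.mul_sum]
    exact Finset.sum_congr rfl fun U _ => by ring
  calc corrExpect ρ g
      = ∑ S : Finset ι, ∑ S' : Finset ι, ∑ T : Finset ι, ∑ U : Finset ι,
          auxFc g T * auxFc g U * (pCorr ρ S S' * (auxChi T S * auxChi U S')) := by
        rw [corrExpect]
        exact Finset.sum_congr rfl fun S _ => Finset.sum_congr rfl fun S' _ => expand S S'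
    _ = ∑ T : Finset ι, ∑ U : Finset ι, ∑ S : Finset ι, ∑ S' : Finset ι,
          auxFc g T * auxFc g U * (pCorr ρ S S' * (auxChi T S * auxChi U S')) := by
        calc ∑ S : Finset ι, ∑ S' : Finset ι, ∑ T : Finset ι, ∑ U : Finset ι,
              auxFc g T * auxFc g U * (pCorr ρ S S' * (auxChi T S * auxChi U S'))
            = ∑ S : Finset ι, ∑ T : Finset ι, ∑ S' : Finset ι, ∑ U : Finset ι,
              auxFc g T * auxFc g U * (pCorr ρ S S' * (auxChi T S * auxChi U S')) :=
              Finset.sum_congr rfl fun S _ => Finset.sum_comm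
          _ = ∑ S : Finset ι, ∑ T : Finset ι, ∑ U : Finset ι, ∑ S' : Finset ι,
              auxFc g T * auxFc g U * (pCorr ρ S S' * (auxChi T S * auxChi U S')) :=
              Finset.sum_congr rfl fun S _ => Finset.sum_congr rfl fun T _ => Finset.sum_comm
          _ = ∑ T : Finset ι, ∑ S : Finset ι, ∑ U : Finset ι, ∑ S' : Finset ι,
              auxFc g T * auxFc g U * (pCorr ρ S S' * (auxChi T S * auxChi U S')) :=
              Finset.sum_comm
          _ = ∑ T : Finset ι, ∑ U : Finset ι, ∑ S : Finset ι, ∑ S' : Finset ι,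
              auxFc g T * auxFc g U * (pCorr ρ S S' * (auxChi T S * auxChi U S')) :=
              Finset.sum_congr rfl fun T _ => Finset.sum_comm
    _ = ∑ T : Finset ι, ∑ U : Finset ι,
          auxFc g T * auxFc g U * (if T = U then ρ ^ T.card else 0) := by
        refine Finset.sum_congr rfl fun T _ => Finset.sum_congr rfl fun U _ => ?_
        rw [← aux_noise ρ T U, Finset.mul_sum]
        exact Finset.sum_congr rfl fun S _ => by rw [Finset.mul_sum]
    _ = ∑ T : Finset ι, ρ ^ T.card * auxFc g T ^ 2 := by
        refine Finset.sum_congr rfl fun T _ => ?_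
        simp only [mul_ite, mul_zero]
        rw [Finset.sum_ite_eq Finset.univ T (fun U => auxFc g T * auxFc g U * ρ ^ T.card)]
        simp [pow_two]; ring

end FourierAux


/-- Main theorem. -/
theorem stmt_11 {ι : Type*} [Fintype ι] [DecidableEq ι]
    (hn : 1 ≤ Fintype.card ι)
    (g : Finset ι → ℝ) (ρ : ℝ) (hρ0 : 0 ≤ ρ) (hρ1 : ρ < 1) :
    ∃ w₀ : ℝ, ∃ w : ι → ℝ,
      expectU (fun S => (g S - w₀ - ∑ i ∈ S, w i) ^ 2) ≤
        (1 / (1 - ρ ^ 2)) * (expectU (fun S => g S ^ 2) - corrExpect ρ g) := by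
  classical
  set a : Finset ι → ℝ := auxFc g with ha
  refine ⟨a ∅ - ∑ i : ι, a {i}, fun i => 2 * a {i}, ?_⟩
  set h : Finset ι → ℝ :=
    fun S => g S - (a ∅ - ∑ i : ι, a {i}) - ∑ i ∈ S, 2 * a {i} with hh
  -- h in terms of characters
  have hform : ∀ S, h S = g S - (a ∅ * auxChi ∅ S + ∑ i : ι, a {i} * auxChi {i} S) := by
    intro S
    have hchi0 : auxChi (∅ : Finset ι) S = 1 := by simp [auxChi]
    have hchi1 : ∀ i : ι, auxChi {i} S = if i ∈ S then (1:ℝ) else -1 := by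
      intro i; simp [auxChi]
    have hsum : ∑ i : ι, a {i} * auxChi {i} S
        = 2 * (∑ i ∈ S, a {i}) - ∑ i : ι, a {i} := by
      have hpt : ∀ i : ι, a {i} * auxChi {i} S
          = 2 * (if i ∈ S then a {i} else 0) - a {i} := by
        intro i; rw [hchi1]; by_cases hi : i ∈ S <;> simp [hi] <;> ring
      rw [Finset.sum_congr rfl fun i _ => hpt i, Finset.sum_sub_distrib, ← Finset.mul_sum]
      congr 2
      simp [Finset.sum_ite_mem]
    have h2 : ∑ i ∈ S, 2 * a {i} = 2 * ∑ i ∈ S, a {i} := (Finset.mul_sum _ _ _).symm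
    rw [hchi0, hsum]
    simp only [hh]
    rw [h2]; ring
  -- linearity helpers
  have fc_sub : ∀ (f l : Finset ι → ℝ) T,
      auxFc (fun S => f S - l S) T = auxFc f T - auxFc l T := by
    intro f l T
    simp only [auxFc, sub_mul, Finset.sum_sub_distrib, mul_sub]
  have fc_add : ∀ (f l : Finset ι → ℝ) T,
      auxFc (fun S => f S + l S) T = auxFc f T + auxFc l T := by
    intro f l T
    simp only [auxFc, add_mul, Finset.sum_add_distrib, mul_add]
  have fc_smul : ∀ (c : ℝ) (f : Finset ι → ℝ) T,
      auxFc (fun S => c * f S) T = c * auxFc f T := by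
    intro c f T
    simp only [auxFc, mul_assoc]
    rw [← Finset.mul_sum, ← mul_assoc, mul_comm _ c, mul_assoc]
  have fc_sum : ∀ (F : ι → Finset ι → ℝ) T,
      auxFc (fun S => ∑ i : ι, F i S) T = ∑ i : ι, auxFc (F i) T := by
    intro F T
    simp only [auxFc, Finset.sum_mul]
    rw [Finset.sum_comm, Finset.mul_sum]
  -- Fourier coefficients of h
  have hTcoef : ∀ T : Finset ι, auxFc h T
      = a T - ((if (∅ : Finset ι) = T then a ∅ else 0)
          + ∑ i : ι, a {i} * (if ({i} : Finset ι) = T then 1 else 0)) := by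
    intro T
    calc auxFc h T
        = auxFc (fun S => g S -
            (a ∅ * auxChi ∅ S + ∑ i : ι, a {i} * auxChi {i} S)) T := by
          congr 1; exact funext hform
      _ = auxFc g T - (auxFc (fun S => a ∅ * auxChi ∅ S) T
            + auxFc (fun S => ∑ i : ι, a {i} * auxChi {i} S) T) := by
          rw [fc_sub, fc_add]
      _ = _ := by
          rw [fc_smul, fc_sum, aux_orth]
          have hi : ∀ i : ι, auxFc (fun S => a {i} * auxChi {i} S) T
              = a {i} * (if ({i} : Finset ι) = T then 1 else 0) := by
            intro i; rw [fc_smul, aux_orth]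
          rw [Finset.sum_congr rfl fun i _ => hi i]
          congr 2
          by_cases h0 : (∅ : Finset ι) = T <;> simp [h0]
  have hT0 : auxFc h ∅ = 0 := by
    rw [hTcoef]
    simp [Finset.singleton_ne_empty]
  have hT1 : ∀ j : ι, auxFc h {j} = 0 := by
    intro j
    rw [hTcoef]
    have hiff : ∀ i : ι, (({i} : Finset ι) = {j}) ↔ i = j := by
      intro i; exact Finset.singleton_inj
    have : ∑ i : ι, a {i} * (if ({i} : Finset ι) = {j} then (1:ℝ) else 0) = a {j} := by
      rw [Finset.sum_congr rfl fun i _ => by rw [if_congr (hiff i) rfl rfl]]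
      simp [mul_ite]
    rw [this]
    simp [(Finset.singleton_ne_empty j).symm]
  have hT2 : ∀ T : Finset ι, 2 ≤ T.card → auxFc h T = a T := by
    intro T hc
    rw [hTcoef]
    have h0 : ¬ ((∅ : Finset ι) = T) := by
      intro e; rw [← e] at hc; simp at hc
    have h1 : ∀ i : ι, ¬ (({i} : Finset ι) = T) := by
      intro i e; rw [← e] at hc; simp at hc
    simp [h0, h1]
  -- assemble
  have lhs_eq : expectU (fun S => (g S - (a ∅ - ∑ i : ι, a {i}) - ∑ i ∈ S, 2 * a {i}) ^ 2)
      = ∑ T : Finset ι, auxFc h T ^ 2 := by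
    have e1 : (fun S => (g S - (a ∅ - ∑ i : ι, a {i}) - ∑ i ∈ S, 2 * a {i}) ^ 2)
        = fun S => h S * h S := by
      funext S; rw [pow_two]
    rw [e1, aux_plancherel]
    exact Finset.sum_congr rfl fun T _ => (pow_two _).symm
  have rhs_eq : expectU (fun S => g S ^ 2) = ∑ T : Finset ι, a T ^ 2 := by
    have e1 : (fun S : Finset ι => g S ^ 2) = fun S => g S * g S := by
      funext S; rw [pow_two]
    rw [e1, aux_plancherel]
    exact Finset.sum_congr rfl fun T _ => (pow_two _).symm
  rw [lhs_eq, rhs_eq, aux_corr_eq, ← Finset.sum_sub_distrib, Finset.mul_sum]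
  refine Finset.sum_le_sum fun T _ => ?_
  have hpos : (0:ℝ) < 1 - ρ ^ 2 := by nlinarith
  rcases le_or_gt T.card 1 with hcard | hcard
  · have hz : auxFc h T = 0 := by
      rcases Nat.le_one_iff_eq_zero_or_eq_one.mp hcard with h' | h'
      · rw [Finset.card_eq_zero.mp h']; exact hT0
      · obtain ⟨j, rfl⟩ := Finset.card_eq_one.mp h'; exact hT1 j
    rw [hz]
    have hle1 : ρ ^ T.card ≤ 1 := pow_le_one₀ hρ0 hρ1.le
    have hnn : (0:ℝ) ≤ a T ^ 2 - ρ ^ T.card * a T ^ 2 := by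
      nlinarith [sq_nonneg (a T)]
    have := mul_nonneg (le_of_lt (one_div_pos.mpr hpos)) hnn
    simpa using this
  · have hc2 : 2 ≤ T.card := hcard
    rw [hT2 T hc2]
    have hpow : ρ ^ T.card ≤ ρ ^ 2 := pow_le_pow_of_le_one hρ0 hρ1.le hc2
    rw [one_div, inv_mul_eq_div, le_div_iff₀ hpos]
    nlinarith [sq_nonneg (a T), mul_le_mul_of_nonneg_left hpow (sq_nonneg (a T))]
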